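/- For every natural number t ≥ 1, the forest consisting of the disjoint union of stars K_{2^j,1} for j = 0, 1, ..., t−1 has exactly 2^(2^t) − 1 independent sets, and has 2^t + t − 1 vertices. -/

import Mathlib

/-- `s` is an independent set of vertices in `G`. -/
def IsIndep {V : Type*} (G : SimpleGraph V) (s : Finset V) : Prop :=
  ∀ u ∈ s, ∀ v ∈ s, ¬ G.Adj u v

/-- `s` is a maximal independent set in `G`. -/
def IsMaxIndep {V : Type*} (G : SimpleGraph V) (s : Finset V) : Prop :=
  IsIndep G s ∧ ∀ t : Finset V, IsIndep G t → s ⊆ t → s = t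

/-- `ι G`: the number of independent sets of `G` (including `∅`). -/
noncomputable def iota {V : Type*} [Fintype V] (G : SimpleGraph V) : ℕ :=
  Nat.card {s : Finset V // IsIndep G s}

/-- `ι_m G`: the number of maximal independent sets of `G`. -/
noncomputable def iotaM {V : Type*} [Fintype V] (G : SimpleGraph V) : ℕ :=
  Nat.card {s : Finset V // IsMaxIndep G s}

/-- `(L, R)` is a bipartition of `G`. -/
def IsBipartition {V : Type*} (G : SimpleGraph V) (L R : Finset V) : Prop :=
  Disjoint L R ∧ (∀ v : V, v ∈ L ∨ v ∈ R) ∧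
    ∀ u v : V, G.Adj u v → (u ∈ L ∧ v ∈ R) ∨ (u ∈ R ∧ v ∈ L)

/-- `G` is bipartite. -/
def IsBipartite {V : Type*} (G : SimpleGraph V) : Prop :=
  ∃ L R : Finset V, IsBipartition G L R

/-- `G` has no isolated vertices. -/
def NoIsolated {V : Type*} (G : SimpleGraph V) : Prop :=
  ∀ v : V, ∃ u : V, G.Adj v u

-- auxiliary lemmas
lemma prod_aux : ∀ t : ℕ, (∏ j : Fin t, (2 ^ (2 ^ (j : ℕ)) + 1)) = 2 ^ (2 ^ t) - 1 := by
  intro t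
  induction t with
  | zero => simp
  | succ n ih =>
    rw [Fin.prod_univ_castSucc]
    simp only [Fin.coe_castSucc, Fin.val_last]
    rw [ih]
    have h : 1 ≤ 2 ^ (2 ^ n) := Nat.one_le_two_pow
    have h0 : 2 ^ (2 ^ (n+1)) = 2 ^ (2 ^ n) * 2 ^ (2 ^ n) := by
      rw [← pow_add]; ring_nf
    rw [h0]
    obtain ⟨m, hm⟩ := Nat.exists_eq_add_of_le h
    rw [hm]
    have h2 : (1+m)*(1+m) = m*(1+m+1)+1 := by ring
    have h3 : 1+m-1 = m := by omega
    rw [h3, h2]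
    omega

lemma sum_aux : ∀ t : ℕ, (∑ j : Fin t, (2 ^ (j : ℕ) + 1)) = 2 ^ t + t - 1 := by
  intro t
  induction t with
  | zero => simp
  | succ n ih =>
    rw [Fin.sum_univ_castSucc]
    simp only [Fin.coe_castSucc, Fin.val_last]
    rw [ih]
    have h : 1 ≤ 2 ^ n := Nat.one_le_two_pow
    rw [pow_succ]
    omega

theorem stmt_3 (t : ℕ) (ht : 1 ≤ t)
    (F : SimpleGraph (Σ j : Fin t, Option (Fin (2 ^ (j : ℕ)))))
    (hF : ∀ x y : (Σ j : Fin t, Option (Fin (2 ^ (j : ℕ)))),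
      F.Adj x y ↔ x.1 = y.1 ∧ ((x.2 = none ∧ y.2 ≠ none) ∨ (y.2 = none ∧ x.2 ≠ none))) :
    iota F = 2 ^ (2 ^ t) - 1 ∧
      Fintype.card (Σ j : Fin t, Option (Fin (2 ^ (j : ℕ)))) = 2 ^ t + t - 1 := by
  classical
  constructor
  · -- count independent sets
    let V := (Σ j : Fin t, Option (Fin (2 ^ (j : ℕ))))
    -- predicate for the inverse map
    let P : (∀ j : Fin t, Option (Finset (Fin (2 ^ (j : ℕ))))) → V → Prop :=
      fun f x => match x with
        | ⟨j, none⟩ => f j = none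
        | ⟨j, some a⟩ => ∃ A, f j = some A ∧ a ∈ A
    let inv : (∀ j : Fin t, Option (Finset (Fin (2 ^ (j : ℕ))))) → Finset V :=
      fun f => Finset.univ.filter (P f)
    have hinv_indep : ∀ f, IsIndep F (inv f) := by
      intro f u hu v hv hadj
      rw [hF] at hadj
      obtain ⟨h1, h2⟩ := hadj
      obtain ⟨ju, ou⟩ := u
      obtain ⟨jv, ov⟩ := v
      simp only at h1
      subst h1
      simp only [inv, Finset.mem_filter] at hu hv
      rcases h2 with ⟨hu0, hv0⟩ | ⟨hv0, hu0⟩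
      · simp only at hu0; subst hu0
        rcases ov with _ | a
        · exact hv0 rfl
        · have h1 := hu.2
          have h2 := hv.2
          simp only [P] at h1 h2
          obtain ⟨A, hA, _⟩ := h2
          rw [h1] at hA; exact nomatch hA
      · simp only at hv0; subst hv0
        rcases ou with _ | a
        · exact hu0 rfl
        · have h1 := hv.2
          have h2 := hu.2
          simp only [P] at h1 h2
          obtain ⟨A, hA, _⟩ := h2
          rw [h1] at hA; exact nomatch hA
    let e : {s : Finset V // IsIndep F s} ≃ (∀ j : Fin t, Option (Finset (Fin (2 ^ (j : ℕ))))) :=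
      { toFun := fun s j =>
          if (⟨j, none⟩ : V) ∈ s.1 then none
          else some (Finset.univ.filter (fun a => (⟨j, some a⟩ : V) ∈ s.1))
        invFun := fun f => ⟨inv f, hinv_indep f⟩
        left_inv := by
          rintro ⟨s, hs⟩
          ext x
          obtain ⟨j, o⟩ := x
          cases o with
          | none =>
            simp only [inv, P, Finset.mem_filter, Finset.mem_univ, true_and]
            by_cases h : (⟨j, none⟩ : V) ∈ s <;> simp [h]
          | some a =>
            simp only [inv, P, Finset.mem_filter, Finset.mem_univ, true_and]
            by_cases h : (⟨j, none⟩ : V) ∈ s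
            · simp only [h, if_true]
              constructor
              · rintro ⟨A, hA, _⟩; exact nomatch hA
              · intro hmem
                exfalso
                refine hs _ h _ hmem ?_
                rw [hF]
                simp
            · simp only [h, if_false]
              constructor
              · rintro ⟨A, hA, ha⟩
                rw [Option.some_inj] at hA
                rw [← hA] at ha
                simpa using ha
              · intro hmem
                exact ⟨_, rfl, by simpa using hmem⟩
        right_inv := by
          intro f
          funext j
          by_cases h : f j = none
          · have hmem : (⟨j, none⟩ : V) ∈ inv f := by
              simp only [inv, P, Finset.mem_filter, Finset.mem_univ, true_and]
              exact h
            simp [hmem, h]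
          · obtain ⟨A, hA⟩ := Option.ne_none_iff_exists'.mp h
            have hmem : (⟨j, none⟩ : V) ∉ inv f := by
              simp only [inv, P, Finset.mem_filter, Finset.mem_univ, true_and]
              rw [hA]; exact fun h' => nomatch h'
            simp only [hmem, if_false, hA, Option.some_inj]
            ext a
            simp only [inv, P, Finset.mem_filter, Finset.mem_univ, true_and, hA]
            constructor
            · rintro ⟨B, hB, hb⟩
              rw [Option.some_inj] at hB; rw [hB]; exact hb
            · intro ha; exact ⟨A, rfl, ha⟩ }
    rw [iota, Nat.card_congr e, Nat.card_pi]
    have : ∀ j : Fin t, Nat.card (Option (Finset (Fin (2 ^ (j : ℕ))))) = 2 ^ (2 ^ (j : ℕ)) + 1 := by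
      intro j
      simp [Nat.card_eq_fintype_card, Fintype.card_option, Fintype.card_finset]
    rw [Finset.prod_congr rfl (fun j _ => this j)]
    exact prod_aux t
  · rw [Fintype.card_sigma]
    simp only [Fintype.card_option, Fintype.card_fin]
    exact sum_aux t
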